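/- For the defeasible theory D consisting solely of the rule r₁: p ⇒ p, neither D ⊢ +∂p nor D ⊢ -∂p holds; hence p is defeasibly unknowable and D is not complete. -/
import Mathlib


/-! Core: propositional Defeasible Logic (proof theory via derivations) -/

/-- Literals: positive or negative atoms. -/
inductive Lit : Type
  | pos : ℕ → Lit
  | neg : ℕ → Lit
deriving DecidableEq, Repr

/-- The complement `~q` of a literal. -/
def Lit.compl : Lit → Lit
  | .pos n => .neg n
  | .neg n => .pos n

/-- The three kinds of rules in a defeasible theory. -/
inductive RuleKind : Type
  | strict | defeasible | defeater
deriving DecidableEq, Repr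

/-- A rule with a unique label (name), kind, antecedent and literal head. -/
structure DLRule : Type where
  name : ℕ
  kind : RuleKind
  ante : List Lit
  head : Lit
deriving DecidableEq, Repr

/-- A (finite, propositional) defeasible theory `D = (F, R, >)`. -/
structure DTheory : Type where
  facts : Finset Lit
  rules : Finset DLRule
  sup : DLRule → DLRule → Prop

/-- The four proof tags `+Δ`, `-Δ`, `+∂`, `-∂`. -/
inductive Tag : Type
  | pDelta | mDelta | pPartial | mPartial
deriving DecidableEq, Repr

/-- A tagged literal (a conclusion). -/
abbrev TaggedLit := Tag × Lit

/-- The inference conditions of Defeasible Logic: the tagged literal `c` may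
be appended to a derivation whose earlier lines are `prev`. -/
def ValidLine (D : DTheory) (prev : List TaggedLit) : TaggedLit → Prop
  | (Tag.pDelta, q) =>
      q ∈ D.facts ∨
      ∃ r ∈ D.rules, r.kind = RuleKind.strict ∧ r.head = q ∧
        ∀ a ∈ r.ante, (Tag.pDelta, a) ∈ prev
  | (Tag.mDelta, q) =>
      q ∉ D.facts ∧
      ∀ r ∈ D.rules, r.kind = RuleKind.strict → r.head = q →
        ∃ a ∈ r.ante, (Tag.mDelta, a) ∈ prev
  | (Tag.pPartial, q) =>
      (Tag.pDelta, q) ∈ prev ∨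
      ((∃ r ∈ D.rules, r.kind ≠ RuleKind.defeater ∧ r.head = q ∧
          ∀ a ∈ r.ante, (Tag.pPartial, a) ∈ prev) ∧
       (Tag.mDelta, q.compl) ∈ prev ∧
       ∀ s ∈ D.rules, s.head = q.compl →
         (∃ a ∈ s.ante, (Tag.mPartial, a) ∈ prev) ∨
         (∃ t ∈ D.rules, t.kind ≠ RuleKind.defeater ∧ t.head = q ∧
           (∀ a ∈ t.ante, (Tag.pPartial, a) ∈ prev) ∧ D.sup t s))
  | (Tag.mPartial, q) =>
      (Tag.mDelta, q) ∈ prev ∧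
      ((∀ r ∈ D.rules, r.kind ≠ RuleKind.defeater → r.head = q →
          ∃ a ∈ r.ante, (Tag.mPartial, a) ∈ prev) ∨
       (Tag.pDelta, q.compl) ∈ prev ∨
       (∃ s ∈ D.rules, s.head = q.compl ∧
          (∀ a ∈ s.ante, (Tag.pPartial, a) ∈ prev) ∧
          ∀ t ∈ D.rules, t.kind ≠ RuleKind.defeater → t.head = q →
            (∃ a ∈ t.ante, (Tag.mPartial, a) ∈ prev) ∨ ¬ D.sup t s))

/-- `P` is a derivation in `D`: a finite sequence of tagged literals each of
which satisfies the inference conditions w.r.t. the earlier lines. -/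
def IsDerivation (D : DTheory) (P : List TaggedLit) : Prop :=
  ∀ (i : ℕ) (h : i < P.length), ValidLine D (P.take i) (P.get ⟨i, h⟩)

/-- `D ⊢ (t, q)` : the tagged literal is a line of some derivation in `D`. -/
def Proves (D : DTheory) (t : Tag) (q : Lit) : Prop :=
  ∃ P : List TaggedLit, IsDerivation D P ∧ (t, q) ∈ P

/-- `D ⊢ +Δ q`. -/
abbrev PDelta (D : DTheory) (q : Lit) : Prop := Proves D Tag.pDelta q
/-- `D ⊢ -Δ q`. -/
abbrev MDelta (D : DTheory) (q : Lit) : Prop := Proves D Tag.mDelta q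
/-- `D ⊢ +∂ q`. -/
abbrev PPartial (D : DTheory) (q : Lit) : Prop := Proves D Tag.pPartial q
/-- `D ⊢ -∂ q`. -/
abbrev MPartial (D : DTheory) (q : Lit) : Prop := Proves D Tag.mPartial q

/-- `q` is strictly unknowable in `D`. -/
def StrictlyUnknowable (D : DTheory) (q : Lit) : Prop := ¬ PDelta D q ∧ ¬ MDelta D q

/-- `q` is defeasibly unknowable in `D`. -/
def DefeasiblyUnknowable (D : DTheory) (q : Lit) : Prop := ¬ PPartial D q ∧ ¬ MPartial D q

/-- `q` is unknowable in `D`. -/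
def Unknowable (D : DTheory) (q : Lit) : Prop :=
  StrictlyUnknowable D q ∨ DefeasiblyUnknowable D q

/-- The point `{q, ~q}` of the dependency graph corresponding to a literal `q`. -/
def Lit.pt (q : Lit) : Set Lit := {q, q.compl}

/-- Arc of the dependency graph `DG(D)` from point `{b,~b}` to point `{a,~a}`:
there is a strict or defeasible rule whose head is in `{b,~b}` and some antecedent
in `{a,~a}`.  (Stated on representative literals; it is complement-invariant.) -/
def DepArc (D : DTheory) (b a : Lit) : Prop :=
  ∃ r ∈ D.rules, r.kind ≠ RuleKind.defeater ∧
    (r.head = b ∨ r.head = b.compl) ∧ (a ∈ r.ante ∨ a.compl ∈ r.ante)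

/-- `D` is decisive iff its dependency graph is acyclic. -/
def Decisive (D : DTheory) : Prop := ∀ q : Lit, ¬ Relation.TransGen (DepArc D) q q

/-- The theory consisting solely of the rule `r₁ : p ⇒ p`. -/
def Dself : DTheory :=
  ⟨∅, {⟨1, RuleKind.defeasible, [Lit.pos 0], Lit.pos 0⟩}, fun _ _ => False⟩

/-- "Bad" lines: those that can never occur in a derivation in `Dself`. -/
def BadLine (c : TaggedLit) : Prop :=
  c.1 = Tag.pDelta ∨ c = (Tag.pPartial, Lit.pos 0) ∨ c = (Tag.mPartial, Lit.pos 0)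

lemma key_step (prev : List TaggedLit) (h : ∀ c ∈ prev, ¬ BadLine c)
    (c : TaggedLit) (hv : ValidLine Dself prev c) : ¬ BadLine c := by
  intro hb
  rcases hb with h1 | h2 | h3
  · obtain ⟨t, q⟩ := c
    simp only at h1; subst h1
    simp only [ValidLine, Dself] at hv
    rcases hv with hq | ⟨r, hr, hs, _⟩
    · simp at hq
    · simp only [Finset.mem_singleton] at hr
      subst hr; simp at hs
  · subst h2
    simp only [ValidLine, Dself] at hv
    rcases hv with hp | ⟨⟨r, hr, _, hh, ha⟩, _, _⟩
    · exact h _ hp (Or.inl rfl)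
    · simp only [Finset.mem_singleton] at hr
      subst hr
      have := ha (Lit.pos 0) (by simp)
      exact h _ this (Or.inr (Or.inl rfl))
  · subst h3
    simp only [ValidLine, Dself] at hv
    obtain ⟨_, hA | hB | hC⟩ := hv
    · have := hA ⟨1, RuleKind.defeasible, [Lit.pos 0], Lit.pos 0⟩ (by simp)
        (by simp) rfl
      obtain ⟨a, ha, hm⟩ := this
      simp only [List.mem_singleton] at ha; subst ha
      exact h _ hm (Or.inr (Or.inr rfl))
    · exact h _ hB (Or.inl rfl)
    · obtain ⟨s, hs, hh, _⟩ := hC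
      simp only [Finset.mem_singleton] at hs
      subst hs
      simp [Lit.compl] at hh

lemma no_bad (P : List TaggedLit) (hP : IsDerivation Dself P) :
    ∀ i (h : i < P.length), ¬ BadLine (P.get ⟨i, h⟩) := by
  intro i
  induction i using Nat.strong_induction_on with
  | _ i ih =>
    intro h
    refine key_step (P.take i) ?_ _ (hP i h)
    intro c hc
    obtain ⟨j, hj, hje⟩ := List.mem_iff_getElem.mp hc
    have hj' : j < i := lt_of_lt_of_le hj (by simp [List.length_take])
    rw [List.getElem_take] at hje
    subst hje
    exact ih j hj' (hj'.trans h)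

/-- for `Dself`, neither `+∂p` nor `-∂p` is provable; `p` is
defeasibly unknowable and `Dself` is not complete. -/
theorem self_loop_incomplete :
    ¬ PPartial Dself (Lit.pos 0) ∧ ¬ MPartial Dself (Lit.pos 0) ∧
    DefeasiblyUnknowable Dself (Lit.pos 0) := by
  have hpp : ¬ PPartial Dself (Lit.pos 0) := by
    rintro ⟨P, hP, hm⟩
    obtain ⟨⟨i, hi⟩, heq⟩ := List.mem_iff_get.mp hm
    exact no_bad P hP i hi (heq ▸ Or.inr (Or.inl rfl))
  have hmp : ¬ MPartial Dself (Lit.pos 0) := by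
    rintro ⟨P, hP, hm⟩
    obtain ⟨⟨i, hi⟩, heq⟩ := List.mem_iff_get.mp hm
    exact no_bad P hP i hi (heq ▸ Or.inr (Or.inr rfl))
  exact ⟨hpp, hmp, hpp, hmp⟩
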